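/- Let f : ℝⁿ → ℝ be p-times continuously differentiable with ∥∇ᵖf(x) − ∇ᵖf(y)∥ ≤ (p−1)!·L·∥x−y∥ for all x, y. Then for all x, s ∈ ℝⁿ, ∥∇f(x+s) − ∇_s T_p(x,s)∥ ≤ L·∥s∥^p, where T_p is the p-th order Taylor polynomial of f at x. -/

import Mathlib

open Finset

set_option maxHeartbeats 1000000 in
open intervalIntegral in
theorem taylor_aux {E G : Type*} [NormedAddCommGroup E] [NormedSpace ℝ E]
    [NormedAddCommGroup G] [NormedSpace ℝ G] [CompleteSpace G]
    (q : ℕ) (F : E → G) (hF : ContDiff ℝ (q : ℕ∞) F) (C : ℝ) (hC : 0 ≤ C)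
    (hLip : ∀ a b, ‖iteratedFDeriv ℝ q F a - iteratedFDeriv ℝ q F b‖ ≤ C * ‖a - b‖)
    (x s : E) :
    ‖F (x + s) - ∑ j ∈ Finset.range (q + 1),
        ((1 : ℝ) / (Nat.factorial j)) • iteratedFDeriv ℝ j F x (fun _ => s)‖
      ≤ C / (Nat.factorial q) * ‖s‖ ^ (q + 1) := by
  obtain _ | r := q
  · -- q = 0
    have h := hLip (x + s) x
    rw [iteratedFDeriv_zero_eq_comp] at h
    simp only [Function.comp_apply] at h
    rw [← LinearIsometryEquiv.map_sub, LinearIsometryEquiv.norm_map] at h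
    simp only [add_sub_cancel_left] at h
    simpa [iteratedFDeriv_zero_apply] using h.trans_eq (by ring)
  · set q := r + 1 with hq
    set y : ℝ → E := fun t => x + t • s with hy
    have hyd : ∀ t : ℝ, HasDerivAt y s t := fun t => by
      simpa [hy] using ((hasDerivAt_id t).smul_const s).const_add x
    set A : ℕ → ℝ → G := fun j t => iteratedFDeriv ℝ j F (y t) (fun _ => s) with hA
    set K : G := iteratedFDeriv ℝ q F x (fun _ => s) with hK
    have hAderiv : ∀ j, j < q → ∀ t : ℝ, HasDerivAt (A j) (A (j + 1) t) t := by
      intro j hj t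
      have hd : DifferentiableAt ℝ (iteratedFDeriv ℝ j F) (y t) :=
        (hF.differentiable_iteratedFDeriv (by exact_mod_cast hj)).differentiableAt
      have h1 : HasDerivAt (fun u => iteratedFDeriv ℝ j F (y u))
          (fderiv ℝ (iteratedFDeriv ℝ j F) (y t) s) t :=
        hd.hasFDerivAt.comp_hasDerivAt t (hyd t)
      have h2 := (ContinuousMultilinearMap.apply ℝ (fun _ : Fin j => E) G
          (fun _ => s)).hasFDerivAt.comp_hasDerivAt t h1
      convert h2 using 1
      · rfl
      · show iteratedFDeriv ℝ (j + 1) F (y t) (fun _ => s) = _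
        rw [iteratedFDeriv_succ_apply_left]
        rfl
    -- scalar coefficient derivatives
    have hcderiv : ∀ (j : ℕ) (t : ℝ), HasDerivAt (fun u : ℝ => (1 - u) ^ j / (Nat.factorial j))
        (-((j : ℝ) * (1 - t) ^ (j - 1)) / (Nat.factorial j)) t := by
      intro j t
      have h0 : HasDerivAt (fun u : ℝ => (1 - u)) (-1) t := by
        simpa using (hasDerivAt_id t).const_sub 1
      have := (h0.pow j).div_const (Nat.factorial j : ℝ)
      refine this.congr_deriv ?_
      ring
    set Ej : ℕ → ℝ → G := fun j t =>
      (((j : ℝ) * (1 - t) ^ (j - 1)) / (Nat.factorial j)) • A j t with hEj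
    set g : ℝ → G := fun t =>
      (∑ j ∈ Finset.range q, ((1 - t) ^ j / (Nat.factorial j)) • A j t)
        + ((1 - t) ^ q / (Nat.factorial q)) • K with hg
    set g' : ℝ → G := fun t =>
      ((1 - t) ^ r / (Nat.factorial r)) • (A q t - K) with hg'
    have hgderiv : ∀ t : ℝ, HasDerivAt g (g' t) t := by
      intro t
      have hsum : HasDerivAt (fun u : ℝ => ∑ j ∈ Finset.range q,
          ((1 - u) ^ j / (Nat.factorial j)) • A j u)
          (∑ j ∈ Finset.range q, (Ej (j + 1) t - Ej j t)) t := by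
        apply HasDerivAt.fun_sum
        intro j hj
        have hj' : j < q := Finset.mem_range.mp hj
        have h := (hcderiv j t).smul (hAderiv j hj' t)
        convert h using 1
        · rfl
        rw [hEj]
        simp only
        rw [sub_eq_add_neg]
        congr 1
        · -- Ej (j+1) t = ((1-t)^j / j!) • A (j+1) t
          congr 1
          rw [Nat.add_sub_cancel, Nat.factorial_succ]
          push_cast
          field_simp
        · rw [← neg_smul]
          congr 1
          ring
      have hlast : HasDerivAt (fun u : ℝ => ((1 - u) ^ q / (Nat.factorial q)) • K)
          ((-((q : ℝ) * (1 - t) ^ (q - 1)) / (Nat.factorial q)) • K) t :=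
        (hcderiv q t).smul_const K
      have h := hsum.add hlast
      convert h using 1
      · rfl
      rw [Finset.sum_range_sub (fun j => Ej j t)]
      have hE0 : Ej 0 t = 0 := by simp [hEj]
      have hEq : Ej q t = ((1 - t) ^ r / (Nat.factorial r)) • A q t := by
        rw [hEj]
        simp only
        congr 1
        rw [hq, Nat.add_sub_cancel, Nat.factorial_succ]
        push_cast
        field_simp
      have hKq : (-((q : ℝ) * (1 - t) ^ (q - 1)) / (Nat.factorial q)) • K
          = -(((1 - t) ^ r / (Nat.factorial r)) • K) := by
        rw [← neg_smul]
        congr 1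
        rw [hq, Nat.add_sub_cancel, Nat.factorial_succ]
        push_cast
        field_simp
      rw [hE0, hEq, hKq, sub_zero, hg']
      simp only [smul_sub]
      abel
    have hg0 : g 0 = ∑ j ∈ Finset.range (q + 1),
        ((1 : ℝ) / (Nat.factorial j)) • iteratedFDeriv ℝ j F x (fun _ => s) := by
      simp only [hg]
      conv_rhs => rw [Finset.sum_range_succ]
      congr 1
      · apply Finset.sum_congr rfl
        intro j _
        simp [hA, hy]
      · simp [hK]
    have hg1 : g 1 = F (x + s) := by
      have hsum : (∑ j ∈ Finset.range q, (((1:ℝ) - 1) ^ j / (Nat.factorial j)) • A j 1)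
          = A 0 1 := by
        rw [Finset.sum_eq_single 0]
        · norm_num
        · intro j _ hj0
          simp [zero_pow hj0]
        · intro h
          exact absurd (Finset.mem_range.mpr (by omega)) h
      simp only [hg]
      rw [hsum]
      simp [hA, hy, iteratedFDeriv_zero_apply, zero_pow (show q ≠ 0 by omega)]
    have hbound : ∀ t ∈ Set.Icc (0:ℝ) 1,
        ‖g' t‖ ≤ (C * ‖s‖ ^ (q + 1) / (Nat.factorial r)) * (1 - t) ^ r := by
      intro t ht
      obtain ⟨ht0, ht1⟩ := ht
      have h1t : (0:ℝ) ≤ 1 - t := by linarith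
      rw [hg', norm_smul]
      have hAK : A q t - K = (iteratedFDeriv ℝ q F (y t) - iteratedFDeriv ℝ q F x)
          (fun _ => s) := by
        rw [ContinuousMultilinearMap.sub_apply]
      have h2 : ‖A q t - K‖ ≤ C * ‖s‖ ^ (q + 1) := by
        rw [hAK]
        calc ‖(iteratedFDeriv ℝ q F (y t) - iteratedFDeriv ℝ q F x) (fun _ => s)‖
            ≤ ‖iteratedFDeriv ℝ q F (y t) - iteratedFDeriv ℝ q F x‖ * ∏ _i : Fin q, ‖s‖ :=
              ContinuousMultilinearMap.le_opNorm _ _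
          _ = ‖iteratedFDeriv ℝ q F (y t) - iteratedFDeriv ℝ q F x‖ * ‖s‖ ^ q := by
              rw [Finset.prod_const, Finset.card_univ, Fintype.card_fin]
          _ ≤ (C * ‖y t - x‖) * ‖s‖ ^ q :=
              mul_le_mul_of_nonneg_right (hLip _ _) (by positivity)
          _ ≤ (C * ‖s‖) * ‖s‖ ^ q := by
              apply mul_le_mul_of_nonneg_right _ (by positivity)
              apply mul_le_mul_of_nonneg_left _ hC
              simp only [hy, add_sub_cancel_left, norm_smul]
              calc ‖t‖ * ‖s‖ ≤ 1 * ‖s‖ := by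
                    apply mul_le_mul_of_nonneg_right _ (norm_nonneg s)
                    rw [Real.norm_eq_abs, abs_of_nonneg ht0]
                    exact ht1
                _ = ‖s‖ := one_mul _
          _ = C * ‖s‖ ^ (q + 1) := by ring
      calc ‖(1 - t) ^ r / (Nat.factorial r : ℝ)‖ * ‖A q t - K‖
          ≤ ((1 - t) ^ r / (Nat.factorial r)) * (C * ‖s‖ ^ (q + 1)) := by
            apply mul_le_mul _ h2 (norm_nonneg _)
              (div_nonneg (pow_nonneg h1t r) (by positivity))
            rw [Real.norm_eq_abs,
              abs_of_nonneg (div_nonneg (pow_nonneg h1t r) (by positivity))]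
        _ = (C * ‖s‖ ^ (q + 1) / (Nat.factorial r)) * (1 - t) ^ r := by ring
    have hcy : Continuous y := by
      simp only [hy]
      continuity
    have hcA : Continuous (A q) :=
      (ContinuousMultilinearMap.apply ℝ (fun _ : Fin q => E) G (fun _ => s)).continuous.comp
        ((hF.continuous_iteratedFDeriv le_rfl).comp hcy)
    have hcg' : Continuous g' := by
      simp only [hg']
      exact ((continuous_const.sub continuous_id).pow r |>.div_const _).smul
        (hcA.sub continuous_const)
    have hkey : g 1 - g 0 = ∫ t in (0:ℝ)..1, g' t :=
      (intervalIntegral.integral_eq_sub_of_hasDerivAt (fun t _ => hgderiv t)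
        (hcg'.intervalIntegrable 0 1)).symm
    have hInt : (∫ t in (0:ℝ)..1, (1 - t) ^ r) = 1 / ((r : ℝ) + 1) := by
      rw [intervalIntegral.integral_comp_sub_left (fun u => u ^ r) 1]
      norm_num [integral_pow]
    have hfinal : ‖g 1 - g 0‖ ≤ C / (Nat.factorial q) * ‖s‖ ^ (q + 1) := by
      rw [hkey]
      calc ‖∫ t in (0:ℝ)..1, g' t‖ ≤ ∫ t in (0:ℝ)..1, ‖g' t‖ :=
            intervalIntegral.norm_integral_le_integral_norm zero_le_one
        _ ≤ ∫ t in (0:ℝ)..1, (C * ‖s‖ ^ (q + 1) / (Nat.factorial r)) * (1 - t) ^ r := by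
            apply intervalIntegral.integral_mono_on zero_le_one
              (hcg'.norm.intervalIntegrable 0 1)
              ((continuous_const.mul ((continuous_const.sub continuous_id).pow r)).intervalIntegrable 0 1)
            exact hbound
        _ = (C * ‖s‖ ^ (q + 1) / (Nat.factorial r)) * ∫ t in (0:ℝ)..1, (1 - t) ^ r := by
            rw [intervalIntegral.integral_const_mul]
        _ = C / (Nat.factorial q) * ‖s‖ ^ (q + 1) := by
            rw [hInt, hq, show ((r+1).factorial : ℝ) = ((r:ℝ)+1) * (r.factorial : ℝ) by
              rw [Nat.factorial_succ]; push_cast; ring]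
            have h1 : (r.factorial : ℝ) ≠ 0 := by positivity
            have h2 : ((r:ℝ)+1) ≠ 0 := by positivity
            field_simp
    calc ‖F (x + s) - ∑ j ∈ Finset.range (q + 1),
          ((1 : ℝ) / (Nat.factorial j)) • iteratedFDeriv ℝ j F x (fun _ => s)‖
        = ‖g 1 - g 0‖ := by rw [hg1, hg0]
      _ ≤ _ := hfinal

/-- Gradient Taylor error bound: if `f` is `C^p` with globally Lipschitz `p`-th derivative
(constant `(p-1)! * L`), then `‖∇f(x+s) - ∇_s T_p(x,s)‖ ≤ L * ‖s‖^p`, stated through the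
action on an arbitrary direction `v`. -/
theorem grad_taylor_error_bound {n : ℕ} (p : ℕ) (hp : 1 ≤ p) (L : ℝ) (hL : 0 < L)
    (f : EuclideanSpace ℝ (Fin n) → ℝ)
    (hf : ContDiff ℝ (p : ℕ∞) f)
    (hLip : ∀ x y : EuclideanSpace ℝ (Fin n),
      ‖iteratedFDeriv ℝ p f x - iteratedFDeriv ℝ p f y‖ ≤ (Nat.factorial (p - 1)) * L * ‖x - y‖) :
    ∀ x s v : EuclideanSpace ℝ (Fin n),
      |fderiv ℝ f (x + s) v - ∑ j ∈ Finset.range p,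
          (1 / (Nat.factorial j) : ℝ) *
            iteratedFDeriv ℝ (j + 1) f x (Fin.snoc (fun _ : Fin j => s) v)|
        ≤ L * ‖s‖ ^ p * ‖v‖ := by
  intro x s v
  obtain ⟨q, rfl⟩ : ∃ q, p = q + 1 := ⟨p - 1, by omega⟩
  have hF : ContDiff ℝ (q : ℕ∞) (fun y => fderiv ℝ f y) := hf.fderiv_right (by norm_cast)
  have hLip' : ∀ a b : EuclideanSpace ℝ (Fin n),
      ‖iteratedFDeriv ℝ q (fun y => fderiv ℝ f y) a - iteratedFDeriv ℝ q (fun y => fderiv ℝ f y) b‖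
        ≤ ((Nat.factorial q : ℝ) * L) * ‖a - b‖ := by
    intro a b
    have h := hLip a b
    rw [iteratedFDeriv_succ_eq_comp_right, iteratedFDeriv_succ_eq_comp_right,
      Function.comp_apply, Function.comp_apply, ← LinearIsometryEquiv.map_sub,
      LinearIsometryEquiv.norm_map] at h
    simpa using h
  have key := taylor_aux q (fun y => fderiv ℝ f y) hF ((Nat.factorial q : ℝ) * L)
    (by positivity) hLip' x s
  have happ : ∀ j : ℕ, iteratedFDeriv ℝ (j + 1) f x (Fin.snoc (fun _ : Fin j => s) v)
      = iteratedFDeriv ℝ j (fun y => fderiv ℝ f y) x (fun _ => s) v := by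
    intro j
    rw [iteratedFDeriv_succ_apply_right]
    congr 1 <;> simp
  have hTv : fderiv ℝ f (x + s) v - ∑ j ∈ Finset.range (q + 1),
      (1 / (Nat.factorial j) : ℝ) *
        iteratedFDeriv ℝ (j + 1) f x (Fin.snoc (fun _ : Fin j => s) v)
      = ((fun y => fderiv ℝ f y) (x + s) - ∑ j ∈ Finset.range (q + 1),
          ((1 : ℝ) / (Nat.factorial j)) •
            iteratedFDeriv ℝ j (fun y => fderiv ℝ f y) x (fun _ => s)) v := by
    rw [ContinuousLinearMap.sub_apply, ContinuousLinearMap.sum_apply]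
    simp only [ContinuousLinearMap.smul_apply, smul_eq_mul, happ]
  rw [← Real.norm_eq_abs, hTv]
  refine le_trans (ContinuousLinearMap.le_opNorm _ v) ?_
  calc ‖(fun y => fderiv ℝ f y) (x + s) - ∑ j ∈ Finset.range (q + 1),
          ((1 : ℝ) / (Nat.factorial j)) •
            iteratedFDeriv ℝ j (fun y => fderiv ℝ f y) x (fun _ => s)‖ * ‖v‖
      ≤ ((Nat.factorial q : ℝ) * L / (Nat.factorial q) * ‖s‖ ^ (q + 1)) * ‖v‖ :=
        mul_le_mul_of_nonneg_right key (norm_nonneg v)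
    _ = L * ‖s‖ ^ (q + 1) * ‖v‖ := by
        have h1 : (Nat.factorial q : ℝ) ≠ 0 := by positivity
        field_simp
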